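/- Let A be a d×d matrix over ℝ ∪ {-∞} whose graph is strongly connected, with ρ_max(A) = 0. Then the sequence of (max,+) powers (A^{⊗n})_{n∈ℕ} is ultimately periodic: there exist n₀ and c ≥ 1 such that A^{⊗(n+c)} = A^{⊗n} for all n ≥ n₀. -/

import Mathlib

/-- The `(max,+)` matrix product over the semiring `(ℝ ∪ {-∞}, max, +)`. -/
def mpMul {d : ℕ} (A B : Fin d → Fin d → WithBot ℝ) : Fin d → Fin d → WithBot ℝ :=
  fun i j => Finset.univ.sup (fun p => A i p + B p j)

/-- The `n`-th `(max,+)` power of a matrix. -/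
def mpPow {d : ℕ} (A : Fin d → Fin d → WithBot ℝ) : ℕ → Fin d → Fin d → WithBot ℝ
  | 0 => fun i j => if i = j then (0 : WithBot ℝ) else ⊥
  | n + 1 => mpMul A (mpPow A n)

/-- `p : Fin (c+1) → Fin d` is an elementary circuit of the graph of `A`. -/
def IsElemCircuit {d : ℕ} (A : Fin d → Fin d → WithBot ℝ) (c : ℕ)
    (p : Fin (c + 1) → Fin d) : Prop :=
  0 < c ∧ p 0 = p (Fin.last c) ∧
  (∀ k : Fin c, A (p k.castSucc) (p k.succ) ≠ ⊥) ∧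
  Function.Injective (fun k : Fin c => p k.castSucc)

/-- The set of average weights of elementary circuits of `A`; `ρ_max(A)` is its
supremum. -/
def circuitAvgWeights {d : ℕ} (A : Fin d → Fin d → WithBot ℝ) : Set ℝ :=
  {r : ℝ | ∃ (c : ℕ) (p : Fin (c + 1) → Fin d), IsElemCircuit A c p ∧
    r = (∑ k : Fin c, (A (p k.castSucc) (p k.succ)).unbotD 0) / c}

namespace MPAux

variable {d : ℕ} (A : Fin d → Fin d → WithBot ℝ)

/-- arc weight as a real number -/
def aw (p : ℕ → Fin d) (k : ℕ) : ℝ := (A (p k) (p (k+1))).unbotD 0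

/-- weight of a walk of length `n` -/
def wt (n : ℕ) (p : ℕ → Fin d) : ℝ := ∑ k ∈ Finset.range n, aw A p k

/-- `p` is a walk of length `n` from `i` to `j` -/
def IsWalkFrom (n : ℕ) (i j : Fin d) (p : ℕ → Fin d) : Prop :=
  p 0 = i ∧ p n = j ∧ ∀ k, k < n → A (p k) (p (k+1)) ≠ ⊥

variable {A}

lemma coe_unbot' {x : WithBot ℝ} (h : x ≠ ⊥) : ((x.unbotD 0 : ℝ) : WithBot ℝ) = x := by
  obtain ⟨a, rfl⟩ := WithBot.ne_bot_iff_exists.mp h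
  simp

lemma wt_zero (p : ℕ → Fin d) : wt A 0 p = 0 := by simp [wt]

lemma wt_succ' (n : ℕ) (p : ℕ → Fin d) :
    wt A (n+1) p = aw A p 0 + wt A n (fun k => p (k+1)) := by
  have : wt A n (fun k => p (k+1)) = ∑ k ∈ Finset.range n, aw A p (k+1) := by
    apply Finset.sum_congr rfl; intro k _; simp [aw]
  rw [this, wt, Finset.sum_range_succ', add_comm]

lemma le_pow : ∀ (n : ℕ) (i j : Fin d) (p : ℕ → Fin d), IsWalkFrom A n i j p →
    ((wt A n p : ℝ) : WithBot ℝ) ≤ mpPow A n i j := by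
  intro n
  induction n with
  | zero =>
    intro i j p ⟨h0, h1, _⟩
    simp only [mpPow, wt_zero]
    rw [← h0, ← h1]
    simp
  | succ n ih =>
    intro i j p ⟨h0, h1, harc⟩
    have hW : IsWalkFrom A n (p 1) j (fun k => p (k+1)) :=
      ⟨rfl, h1, fun k hk => harc (k+1) (by omega)⟩
    have h2 := ih (p 1) j _ hW
    have harc0 : A i (p 1) ≠ ⊥ := by rw [← h0]; exact harc 0 (by omega)
    calc ((wt A (n+1) p : ℝ) : WithBot ℝ)
        = A i (p 1) + ((wt A n (fun k => p (k+1)) : ℝ) : WithBot ℝ) := by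
          rw [wt_succ', WithBot.coe_add, ← coe_unbot' harc0]
          congr 2
          simp [aw, h0]
      _ ≤ A i (p 1) + mpPow A n (p 1) j := by
          exact add_le_add (le_refl _) h2
      _ ≤ mpPow A (n+1) i j := by
          exact Finset.le_sup (f := fun q => A i q + mpPow A n q j) (Finset.mem_univ (p 1))

lemma pow_attained : ∀ (n : ℕ) (i j : Fin d), mpPow A n i j = ⊥ ∨
    ∃ p, IsWalkFrom A n i j p ∧ mpPow A n i j = ((wt A n p : ℝ) : WithBot ℝ) := by
  intro n
  induction n with
  | zero =>
    intro i j
    by_cases h : i = j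
    · subst h
      right
      exact ⟨fun _ => i, ⟨rfl, rfl, fun k hk => by omega⟩, by simp [mpPow, wt_zero]⟩
    · left; simp [mpPow, h]
  | succ n ih =>
    intro i j
    by_cases h : mpPow A (n+1) i j = ⊥
    · left; exact h
    · right
      have hne : (Finset.univ : Finset (Fin d)).Nonempty := ⟨i, Finset.mem_univ i⟩
      obtain ⟨q₀, _, hq₀⟩ := Finset.exists_mem_eq_sup Finset.univ hne
        (fun q => A i q + mpPow A n q j)
      have hval : mpPow A (n+1) i j = A i q₀ + mpPow A n q₀ j := by
        show mpMul A (mpPow A n) i j = _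
        rw [mpMul, hq₀]
      have hnb : A i q₀ ≠ ⊥ ∧ mpPow A n q₀ j ≠ ⊥ := by
        rw [hval] at h
        constructor
        · intro hb; exact h (by rw [hb]; simp)
        · intro hb; exact h (by rw [hb]; simp)
      obtain ⟨p', hp', hv'⟩ := (ih q₀ j).resolve_left hnb.2
      refine ⟨fun k => if k = 0 then i else p' (k - 1), ⟨by simp, ?_, ?_⟩, ?_⟩
      · simp only [Nat.succ_ne_zero, if_false]
        simpa using hp'.2.1
      · intro k hk
        rcases Nat.eq_zero_or_pos k with rfl | hkpos
        · simpa [hp'.1] using hnb.1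
        · have h1 : ¬ (k = 0) := by omega
          have h2 : ¬ (k + 1 = 0) := by omega
          simp only [h1, h2, if_false]
          have e2 : k - 1 + 1 = k := by omega
          have hh := hp'.2.2 (k-1) (by omega)
          rw [e2] at hh
          have e3 : k + 1 - 1 = k := by omega
          rw [e3]
          exact hh
      · rw [hval, hv']
        have hwt : wt A (n+1) (fun k => if k = 0 then i else p' (k - 1))
            = (A i q₀).unbotD 0 + wt A n p' := by
          have h2 : (fun k : ℕ => (if k + 1 = 0 then i else p' (k + 1 - 1))) = p' := by
            funext k; simp
          rw [wt_succ']
          show aw A _ 0 + wt A n (fun k : ℕ => (if k + 1 = 0 then i else p' (k + 1 - 1))) = _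
          rw [h2]
          congr 1
          simp [aw, hp'.1]
        rw [hwt, WithBot.coe_add, coe_unbot' hnb.1]

lemma pow_ne_bot_iff {n : ℕ} {i j : Fin d} :
    mpPow A n i j ≠ ⊥ ↔ ∃ p, IsWalkFrom A n i j p := by
  constructor
  · intro h
    obtain ⟨p, hp, _⟩ := (pow_attained n i j).resolve_left h
    exact ⟨p, hp⟩
  · rintro ⟨p, hp⟩
    intro hb
    have := le_pow n i j p hp
    rw [hb] at this
    exact absurd (le_bot_iff.mp this) (by simp)


/-- weight of an elementary circuit -/
def cwt (A : Fin d → Fin d → WithBot ℝ) (c : ℕ) (q : Fin (c+1) → Fin d) : ℝ :=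
  ∑ k : Fin c, (A (q k.castSucc) (q k.succ)).unbotD 0

/-- There is an elementary circuit of length `g` and weight `x`. -/
def CircLW (A : Fin d → Fin d → WithBot ℝ) (g : ℕ) (x : ℝ) : Prop :=
  ∃ q : Fin (g+1) → Fin d, IsElemCircuit A g q ∧ x = cwt A g q

lemma extract_core {n : ℕ} {i j : Fin d} {p : ℕ → Fin d} (hp : IsWalkFrom A n i j p)
    {g a : ℕ} (hgpos : 0 < g) (hag : a + g ≤ n) (heq : p a = p (a+g))
    (hmin : ∀ g' a', 0 < g' → g' < g → a' + g' ≤ n → p a' ≠ p (a' + g')) :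
    CircLW A g (∑ k ∈ Finset.Ico a (a+g), aw A p k) ∧
    IsWalkFrom A (n-g) i j (fun k => if k < a then p k else p (k+g)) ∧
    wt A n p = wt A (n-g) (fun k => if k < a then p k else p (k+g))
      + ∑ k ∈ Finset.Ico a (a+g), aw A p k := by
  refine ⟨?_, ⟨?_, ?_, ?_⟩, ?_⟩
  · -- elementary circuit
    refine ⟨fun k => p (a + k), ⟨hgpos, ?_, ?_, ?_⟩, ?_⟩
    · simp only
      rw [Fin.val_zero, Fin.val_last, Nat.add_zero, heq]
    · intro k
      simp only
      have hk : ((k.castSucc : Fin (g+1)) : ℕ) = (k : ℕ) := rfl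
      have hk2 : ((k.succ : Fin (g+1)) : ℕ) = (k : ℕ) + 1 := rfl
      rw [hk, hk2]
      have e : a + ((k:ℕ)+1) = (a + k) + 1 := by omega
      rw [e]
      exact hp.2.2 (a + k) (by omega)
    · intro k₁ k₂ hkk
      simp only at hkk
      by_contra hne
      have hne' : (k₁ : ℕ) ≠ (k₂ : ℕ) := by
        intro h
        exact hne (Fin.ext h)
      have hb1 : (k₁ : ℕ) < g := k₁.isLt
      have hb2 : (k₂ : ℕ) < g := k₂.isLt
      rcases Nat.lt_or_ge (k₁ : ℕ) (k₂ : ℕ) with hlt | hge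
      · refine hmin ((k₂:ℕ) - (k₁:ℕ)) (a + (k₁:ℕ)) (by omega) (by omega) (by omega) ?_
        rw [(by omega : a + (k₁:ℕ) + ((k₂:ℕ) - (k₁:ℕ)) = a + (k₂:ℕ))]
        exact hkk
      · refine hmin ((k₁:ℕ) - (k₂:ℕ)) (a + (k₂:ℕ)) (by omega) (by omega) (by omega) ?_
        rw [(by omega : a + (k₂:ℕ) + ((k₁:ℕ) - (k₂:ℕ)) = a + (k₁:ℕ))]
        exact hkk.symm
    · -- weight equality
      have e1 : ∀ k : Fin g,
          (A (p (a + ((k.castSucc : Fin (g+1)) : ℕ))) (p (a + ((k.succ : Fin (g+1)) : ℕ)))).unbotD 0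
            = aw A p (a + (k : ℕ)) := by
        intro k
        simp only [aw, Fin.coe_castSucc, Fin.val_succ, Nat.add_assoc]
      rw [cwt]
      rw [Finset.sum_congr rfl (fun k _ => e1 k),
        Fin.sum_univ_eq_sum_range (fun k => aw A p (a + k)) g,
        Finset.sum_Ico_eq_sum_range, (by omega : a + g - a = g)]
  · by_cases h0 : 0 < a
    · simp only [if_pos h0]
      exact hp.1
    · have ha : a = 0 := by omega
      subst ha
      simp only [Nat.lt_irrefl, if_neg (by omega : ¬ (0:ℕ) < 0), Nat.zero_add]
      rw [Nat.zero_add] at heq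
      rw [← heq]
      exact hp.1
  · simp only [if_neg (by omega : ¬ (n - g < a))]
    rw [(by omega : n - g + g = n)]
    exact hp.2.1
  · intro k hk
    simp only
    by_cases h2 : k < a
    · by_cases h1 : k + 1 < a
      · rw [if_pos h2, if_pos h1]
        exact hp.2.2 k (by omega)
      · have h3 : k + 1 = a := by omega
        have hpp : p (k + 1 + g) = p (k+1) := by rw [h3, ← heq]
        rw [if_pos h2, if_neg h1, hpp]
        exact hp.2.2 k (by omega)
    · rw [if_neg h2, if_neg (by omega : ¬ k + 1 < a), (by omega : k + 1 + g = (k+g)+1)]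
      exact hp.2.2 (k + g) (by omega)
  · -- weight identity
    have key : ∀ k, aw A (fun k => if k < a then p k else p (k+g)) k
          = (if k < a then aw A p k else aw A p (k + g)) := by
      intro k
      by_cases h2 : k < a
      · by_cases h1 : k + 1 < a
        · simp only [aw]
          rw [if_pos h2, if_pos h1, if_pos h2]
        · have h3 : k + 1 = a := by omega
          have hpp : p (k + 1 + g) = p (k+1) := by rw [h3, ← heq]
          simp only [aw]
          rw [if_pos h2, if_neg h1, hpp, if_pos h2]
      · simp only [aw]
        rw [if_neg h2, if_neg (by omega : ¬ k + 1 < a), if_neg h2,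
          (by omega : k + 1 + g = (k+g)+1)]
    have hsum : wt A (n-g) (fun k => if k < a then p k else p (k+g))
        = ∑ k ∈ Finset.range a, aw A p k + ∑ k ∈ Finset.Ico (a+g) n, aw A p k := by
      rw [wt, Finset.range_eq_Ico,
        ← Finset.sum_Ico_consecutive _ (by omega : 0 ≤ a) (by omega : a ≤ n - g)]
      congr 1
      · rw [← Finset.range_eq_Ico]
        apply Finset.sum_congr rfl
        intro k hk
        rw [key k, if_pos (Finset.mem_range.mp hk)]
      · rw [Finset.sum_Ico_eq_sum_range, Finset.sum_Ico_eq_sum_range,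
          (by omega : n - g - a = n - (a + g))]
        apply Finset.sum_congr rfl
        intro k _
        rw [key (a + k), if_neg (by omega : ¬ (a + k < a))]
        congr 1
        omega
    rw [hsum, wt, Finset.range_eq_Ico,
      ← Finset.sum_Ico_consecutive (f := aw A p) (by omega : 0 ≤ a) (by omega : a ≤ n),
      ← Finset.sum_Ico_consecutive (f := aw A p) (by omega : a ≤ a + g) (by omega : a + g ≤ n),
      ← Finset.range_eq_Ico]
    ring

lemma extract_step {n : ℕ} {i j : Fin d} {p : ℕ → Fin d} (hp : IsWalkFrom A n i j p)
    (hrep : ∃ g, (0 < g ∧ ∃ a, a + g ≤ n ∧ p a = p (a+g))) :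
    ∃ g a, 0 < g ∧ a + g ≤ n ∧
      CircLW A g (∑ k ∈ Finset.Ico a (a+g), aw A p k) ∧
      IsWalkFrom A (n-g) i j (fun k => if k < a then p k else p (k+g)) ∧
      wt A n p = wt A (n-g) (fun k => if k < a then p k else p (k+g))
        + ∑ k ∈ Finset.Ico a (a+g), aw A p k := by
  classical
  obtain ⟨hgpos, a, hag, heq⟩ := Nat.find_spec hrep
  have hmin : ∀ g' a', 0 < g' → g' < Nat.find hrep → a' + g' ≤ n → p a' ≠ p (a' + g') := by
    intro g' a' h1 h2 h3 hcon
    exact Nat.find_min hrep h2 ⟨h1, a', h3, hcon⟩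
  obtain ⟨h1, h2, h3⟩ := extract_core hp hgpos hag heq hmin
  exact ⟨Nat.find hrep, a, hgpos, hag, h1, h2, h3⟩

lemma ext_walk (hd : 0 < d) : ∀ n (p : ℕ → Fin d) (i j : Fin d), IsWalkFrom A n i j p →
    ∃ (m : ℕ) (q : ℕ → Fin d) (S : List (ℕ × ℝ)), m < d ∧ IsWalkFrom A m i j q ∧
      n = m + (S.map Prod.fst).sum ∧ wt A n p = wt A m q + (S.map Prod.snd).sum ∧
      ∀ gx ∈ S, CircLW A gx.1 gx.2 := by
  intro n
  induction n using Nat.strong_induction_on with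
  | _ n ih =>
    intro p i j hp
    by_cases hn : n < d
    · exact ⟨n, p, [], hn, hp, by simp, by simp, by simp⟩
    · have hrep : ∃ g, (0 < g ∧ ∃ a, a + g ≤ n ∧ p a = p (a+g)) := by
        have hcard : Fintype.card (Fin d) < Fintype.card (Fin (d+1)) := by simp
        obtain ⟨k₁, k₂, hne, hkk⟩ := Fintype.exists_ne_map_eq_of_card_lt
          (fun k : Fin (d+1) => p k) hcard
        rcases Nat.lt_or_ge (k₁ : ℕ) (k₂ : ℕ) with hlt | hge
        · exact ⟨(k₂:ℕ) - (k₁:ℕ), by omega, (k₁:ℕ), by omega,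
            by rw [(by omega : (k₁:ℕ) + ((k₂:ℕ) - (k₁:ℕ)) = (k₂:ℕ))]; exact hkk⟩
        · have hlt2 : (k₂:ℕ) < (k₁:ℕ) := by
            rcases Nat.lt_or_ge (k₂:ℕ) (k₁:ℕ) with h | h
            · exact h
            · exact absurd (Fin.ext (by omega)) hne
          exact ⟨(k₁:ℕ) - (k₂:ℕ), by omega, (k₂:ℕ), by omega,
            by rw [(by omega : (k₂:ℕ) + ((k₁:ℕ) - (k₂:ℕ)) = (k₁:ℕ))]; exact hkk.symm⟩
      obtain ⟨g, a, hgpos, hag, hcirc, hwalk, hwt⟩ := extract_step hp hrep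
      obtain ⟨m, q, S, hm, hq, hlen, hwq, hS⟩ := ih (n - g) (by omega) _ i j hwalk
      refine ⟨m, q, (g, ∑ k ∈ Finset.Ico a (a+g), aw A p k) :: S, hm, hq, ?_, ?_, ?_⟩
      · simp only [List.map_cons, List.sum_cons]
        omega
      · simp only [List.map_cons, List.sum_cons]
        rw [hwt, hwq]
        ring
      · intro gx hgx
        rcases List.mem_cons.mp hgx with h | h
        · rw [h]
          exact hcirc
        · exact hS gx h

lemma ext_closed : ∀ n (p : ℕ → Fin d) (u : Fin d), IsWalkFrom A n u u p →
    ∃ S : List (ℕ × ℝ), n = (S.map Prod.fst).sum ∧ wt A n p = (S.map Prod.snd).sum ∧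
      ∀ gx ∈ S, CircLW A gx.1 gx.2 := by
  intro n
  induction n using Nat.strong_induction_on with
  | _ n ih =>
    intro p u hp
    rcases Nat.eq_zero_or_pos n with rfl | hn
    · exact ⟨[], by simp, by simp [wt_zero], by simp⟩
    · have hrep : ∃ g, (0 < g ∧ ∃ a, a + g ≤ n ∧ p a = p (a+g)) :=
        ⟨n, hn, 0, by omega, by rw [Nat.zero_add, hp.1, hp.2.1]⟩
      obtain ⟨g, a, hgpos, hag, hcirc, hwalk, hwt⟩ := extract_step hp hrep
      obtain ⟨S, hlen, hwq, hS⟩ := ih (n - g) (by omega) _ u hwalk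
      refine ⟨(g, ∑ k ∈ Finset.Ico a (a+g), aw A p k) :: S, ?_, ?_, ?_⟩
      · simp only [List.map_cons, List.sum_cons]
        omega
      · simp only [List.map_cons, List.sum_cons]
        rw [hwt, hwq]
        ring
      · intro gx hgx
        rcases List.mem_cons.mp hgx with h | h
        · rw [h]
          exact hcirc
        · exact hS gx h

/-- set of weights of elementary circuits -/
def WSet (A : Fin d → Fin d → WithBot ℝ) : Set ℝ := {x | ∃ g, CircLW A g x}

lemma circ_len_le {g : ℕ} {q : Fin (g+1) → Fin d} (h : IsElemCircuit A g q) : g ≤ d := by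
  have := Fintype.card_le_of_injective _ h.2.2.2
  simpa using this

lemma avg_mem {g : ℕ} {q : Fin (g+1) → Fin d} (h : IsElemCircuit A g q) :
    cwt A g q / g ∈ circuitAvgWeights A := ⟨g, q, h, rfl⟩

lemma circAvg_finite : (circuitAvgWeights A).Finite := by
  apply Set.Finite.subset (Set.Finite.biUnion (Finset.finite_toSet (Finset.Icc 1 d))
    (fun g _ => Set.finite_range (fun q : Fin (g+1) → Fin d => cwt A g q / g)))
  rintro r ⟨c, p, hc, rfl⟩
  simp only [Set.mem_iUnion, Set.mem_range]
  exact ⟨c, by simp only [Finset.mem_coe, Finset.mem_Icc]; exact ⟨hc.1, circ_len_le hc⟩, p, rfl⟩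

lemma WSet_finite : (WSet A).Finite := by
  apply Set.Finite.subset (Set.Finite.biUnion (Finset.finite_toSet (Finset.Icc 1 d))
    (fun g _ => Set.finite_range (fun q : Fin (g+1) → Fin d => cwt A g q)))
  rintro x ⟨g, q, hc, rfl⟩
  simp only [Set.mem_iUnion, Set.mem_range]
  exact ⟨g, by simp only [Finset.mem_coe, Finset.mem_Icc]; exact ⟨hc.1, circ_len_le hc⟩, q, rfl⟩

lemma cwt_nonpos (hρ : sSup (circuitAvgWeights A) = 0)
    {g : ℕ} {q : Fin (g+1) → Fin d} (h : IsElemCircuit A g q) : cwt A g q ≤ 0 := by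
  have h1 : cwt A g q / g ≤ 0 := by
    rw [← hρ]
    exact le_csSup (circAvg_finite).bddAbove (avg_mem h)
  have hg : (0:ℝ) < g := by
    have := h.1
    exact_mod_cast this
  have h2 := mul_le_mul_of_nonneg_right h1 (le_of_lt hg)
  rw [div_mul_cancel₀ _ (ne_of_gt hg), zero_mul] at h2
  exact h2

lemma clw_nonpos (hρ : sSup (circuitAvgWeights A) = 0) {g : ℕ} {x : ℝ}
    (h : CircLW A g x) : x ≤ 0 := by
  obtain ⟨q, hq, rfl⟩ := h
  exact cwt_nonpos hρ hq

lemma exists_circuit (hd : 0 < d)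
    (hconn : ∀ i j : Fin d, ∃ n : ℕ, 0 < n ∧ mpPow A n i j ≠ ⊥) :
    ∃ g x, CircLW A g x := by
  obtain ⟨n, hn, hne⟩ := hconn ⟨0, hd⟩ ⟨0, hd⟩
  obtain ⟨p, hp⟩ := pow_ne_bot_iff.mp hne
  obtain ⟨S, hlen, _, hS⟩ := ext_closed n p _ hp
  cases S with
  | nil => simp at hlen; omega
  | cons gx S' => exact ⟨gx.1, gx.2, hS gx (List.mem_cons_self)⟩

lemma exists_zero_circuit (hd : 0 < d)
    (hconn : ∀ i j : Fin d, ∃ n : ℕ, 0 < n ∧ mpPow A n i j ≠ ⊥)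
    (hρ : sSup (circuitAvgWeights A) = 0) :
    ∃ g, CircLW A g 0 := by
  obtain ⟨g, x, hgx⟩ := exists_circuit hd hconn
  obtain ⟨q, hq, _⟩ := hgx
  have hmem : (0:ℝ) ∈ circuitAvgWeights A := by
    rw [← hρ]
    exact Set.Nonempty.csSup_mem ⟨_, avg_mem hq⟩ circAvg_finite
  obtain ⟨c, p, hc, hr⟩ := hmem
  refine ⟨c, p, hc, ?_⟩
  have hc0 : (0:ℝ) < c := by exact_mod_cast hc.1
  have : cwt A c p / c = 0 := hr.symm
  have h2 := congrArg (fun y => y * (c:ℝ)) this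
  simp only [zero_mul] at h2
  rw [div_mul_cancel₀ _ (ne_of_gt hc0)] at h2
  exact h2.symm

lemma exists_delta : ∃ δ : ℝ, 0 < δ ∧ ∀ g x, CircLW A g x → x < 0 → x ≤ -δ := by
  classical
  by_cases h : (WSet A ∩ Set.Iio 0).Nonempty
  · have hfin : (WSet A ∩ Set.Iio 0).Finite := (WSet_finite).subset Set.inter_subset_left
    have hmem := Set.Nonempty.csSup_mem h hfin
    refine ⟨-sSup (WSet A ∩ Set.Iio 0), by simpa using hmem.2, ?_⟩
    intro g x hc hx
    rw [neg_neg]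
    exact le_csSup hfin.bddAbove ⟨⟨g, hc⟩, hx⟩
  · exact ⟨1, one_pos, fun g x hc hx => absurd ⟨⟨g, hc⟩, hx⟩ (fun hh => h ⟨x, hh⟩)⟩

/-- global bound on arc weights -/
def M₁ (A : Fin d → Fin d → WithBot ℝ) : ℝ := ∑ i : Fin d, ∑ j : Fin d, |(A i j).unbotD 0|

lemma M₁_nonneg : 0 ≤ M₁ A :=
  Finset.sum_nonneg fun i _ => Finset.sum_nonneg fun j _ => abs_nonneg _

lemma abs_entry_le (i j : Fin d) : |(A i j).unbotD 0| ≤ M₁ A := by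
  calc |(A i j).unbotD 0| ≤ ∑ j' : Fin d, |(A i j').unbotD 0| :=
        Finset.single_le_sum (f := fun j' => |(A i j').unbotD 0|)
          (fun j' _ => abs_nonneg _) (Finset.mem_univ j)
    _ ≤ M₁ A :=
        Finset.single_le_sum (f := fun i' => ∑ j' : Fin d, |(A i' j').unbotD 0|)
          (fun i' _ => Finset.sum_nonneg fun j' _ => abs_nonneg _) (Finset.mem_univ i)

lemma abs_wt_le (n : ℕ) (p : ℕ → Fin d) : |wt A n p| ≤ n * M₁ A := by
  calc |wt A n p| ≤ ∑ k ∈ Finset.range n, |aw A p k| :=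
        Finset.abs_sum_le_sum_abs _ _
    _ ≤ ∑ _k ∈ Finset.range n, M₁ A :=
        Finset.sum_le_sum fun k _ => abs_entry_le _ _
    _ = n * M₁ A := by simp [mul_comm]

lemma walk_len_congr {n n' : ℕ} {i j : Fin d} {p : ℕ → Fin d} (h : n = n')
    (hp : IsWalkFrom A n i j p) : IsWalkFrom A n' i j p := h ▸ hp

lemma walk_nil (u : Fin d) : IsWalkFrom A 0 u u (fun _ => u) ∧ wt A 0 (fun _ => u) = 0 :=
  ⟨⟨rfl, rfl, fun k hk => by omega⟩, by simp [wt_zero]⟩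

/-- concatenation of two walks -/
def wcat (m : ℕ) (p q : ℕ → Fin d) : ℕ → Fin d := fun k => if k < m then p k else q (k - m)

lemma walk_append {m n : ℕ} {i j j' : Fin d} {p q : ℕ → Fin d}
    (hp : IsWalkFrom A m i j p) (hq : IsWalkFrom A n j j' q) :
    IsWalkFrom A (m+n) i j' (wcat m p q) ∧
    wt A (m+n) (wcat m p q) = wt A m p + wt A n q := by
  have hq0 : q 0 = p m := by rw [hq.1, hp.2.1]
  constructor
  · refine ⟨?_, ?_, ?_⟩
    · by_cases h0 : 0 < m
      · simp only [wcat, if_pos h0]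
        exact hp.1
      · have hm : m = 0 := by omega
        subst hm
        simp only [wcat, if_neg (by omega : ¬ (0:ℕ) < 0), Nat.sub_zero]
        rw [hq.1, ← hp.2.1, hp.1]
    · simp only [wcat, if_neg (by omega : ¬ (m + n < m)), Nat.add_sub_cancel_left]
      exact hq.2.1
    · intro k hk
      by_cases h2 : k < m
      · by_cases h1 : k + 1 < m
        · simp only [wcat, if_pos h2, if_pos h1]
          exact hp.2.2 k h2
        · have h3 : k + 1 = m := by omega
          simp only [wcat, if_pos h2, if_neg h1]
          rw [(by omega : k + 1 - m = 0), hq0, ← h3]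
          exact hp.2.2 k h2
      · simp only [wcat, if_neg h2, if_neg (by omega : ¬ k + 1 < m)]
        rw [(by omega : k + 1 - m = (k - m) + 1)]
        exact hq.2.2 (k - m) (by omega)
  · have key : ∀ k, aw A (wcat m p q) k = (if k < m then aw A p k else aw A q (k - m)) := by
      intro k
      by_cases h2 : k < m
      · by_cases h1 : k + 1 < m
        · simp only [aw, wcat, if_pos h2, if_pos h1]
        · have h3 : k + 1 = m := by omega
          simp only [aw, wcat, if_pos h2, if_neg h1]
          rw [(by omega : k + 1 - m = 0), hq0, ← h3]
      · simp only [aw, wcat, if_neg h2, if_neg (by omega : ¬ k + 1 < m)]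
        rw [(by omega : k + 1 - m = (k - m) + 1)]
    rw [wt, Finset.range_eq_Ico,
      ← Finset.sum_Ico_consecutive _ (by omega : 0 ≤ m) (by omega : m ≤ m + n)]
    congr 1
    · rw [← Finset.range_eq_Ico, wt]
      apply Finset.sum_congr rfl
      intro k hk
      rw [key k, if_pos (Finset.mem_range.mp hk)]
    · rw [Finset.sum_Ico_eq_sum_range, Nat.add_sub_cancel_left, wt]
      apply Finset.sum_congr rfl
      intro k _
      rw [key (m + k), if_neg (by omega : ¬ (m + k < m)), (by omega : m + k - m = k)]

/-- the standard walk going once around a circuit -/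
def cpath {g : ℕ} (q : Fin (g+1) → Fin d) : ℕ → Fin d := fun k => q ⟨min k g, by omega⟩

lemma circuit_walk {g : ℕ} {q : Fin (g+1) → Fin d} (h : IsElemCircuit A g q) :
    IsWalkFrom A g (q 0) (q 0) (cpath q) ∧ wt A g (cpath q) = cwt A g q := by
  constructor
  · refine ⟨?_, ?_, ?_⟩
    · show q ⟨min 0 g, _⟩ = q 0
      congr 1
    · show q ⟨min g g, _⟩ = q 0
      rw [h.2.1]
      congr 1
      simp [Fin.ext_iff, Fin.last]
    · intro k hk
      show A (q ⟨min k g, _⟩) (q ⟨min (k+1) g, _⟩) ≠ ⊥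
      have e1 : (⟨min k g, by omega⟩ : Fin (g+1)) = (⟨k, by omega⟩ : Fin g).castSucc := by
        simp [Fin.ext_iff]
        omega
      have e2 : (⟨min (k+1) g, by omega⟩ : Fin (g+1)) = (⟨k, by omega⟩ : Fin g).succ := by
        simp [Fin.ext_iff]
        omega
      rw [e1, e2]
      exact h.2.2.1 ⟨k, by omega⟩
  · have e1 : ∀ k : Fin g, (A (q k.castSucc) (q k.succ)).unbotD 0 = aw A (cpath q) (k : ℕ) := by
      intro k
      have hk : (k:ℕ) < g := k.isLt
      have a1 : (⟨min (k:ℕ) g, by omega⟩ : Fin (g+1)) = k.castSucc := by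
        simp only [Fin.ext_iff, Fin.coe_castSucc]
        omega
      have a2 : (⟨min ((k:ℕ)+1) g, by omega⟩ : Fin (g+1)) = k.succ := by
        simp only [Fin.ext_iff, Fin.val_succ]
        omega
      simp only [aw, cpath]
      rw [a1, a2]
    rw [wt, cwt, Finset.sum_congr rfl (fun k _ => e1 k),
      Fin.sum_univ_eq_sum_range (fun k => aw A (cpath q) k) g]

lemma circuit_iter {g : ℕ} {q : Fin (g+1) → Fin d} (h : IsElemCircuit A g q) :
    ∀ t : ℕ, ∃ p, IsWalkFrom A (t*g) (q 0) (q 0) p ∧ wt A (t*g) p = t * cwt A g q := by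
  intro t
  induction t with
  | zero =>
    refine ⟨fun _ => q 0, ?_, ?_⟩
    · rw [(by omega : 0 * g = 0)]
      exact (walk_nil (q 0)).1
    · rw [(by omega : 0 * g = 0), wt_zero]
      ring
  | succ t ih =>
    obtain ⟨p, hp, hw⟩ := ih
    obtain ⟨h1, h2⟩ := walk_append hp (circuit_walk h).1
    refine ⟨wcat (t*g) p (cpath q), walk_len_congr (by ring) h1, ?_⟩
    rw [(by ring : (t+1)*g = t*g + g), h2, hw, (circuit_walk h).2]
    push_cast
    ring

lemma exists_walk (hconn : ∀ i j : Fin d, ∃ n : ℕ, 0 < n ∧ mpPow A n i j ≠ ⊥)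
    (i j : Fin d) : ∃ n p, IsWalkFrom A n i j p := by
  obtain ⟨n, _, hne⟩ := hconn i j
  obtain ⟨p, hp⟩ := pow_ne_bot_iff.mp hne
  exact ⟨n, p, hp⟩

/-- every sufficiently large multiple of the gcd is a nonnegative combination -/
lemma ns_rep (T : Finset ℕ) (hpos : ∀ t ∈ T, 0 < t) :
    ∃ N : ℕ, ∀ m : ℕ, N ≤ m → T.gcd id ∣ m → ∃ f : ℕ → ℕ, m = ∑ t ∈ T, f t * t := by
  classical
  induction T using Finset.induction_on with
  | empty =>
    refine ⟨1, fun m hm hdvd => ?_⟩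
    rw [Finset.gcd_empty] at hdvd
    omega
  | @insert a T' ha ih =>
    have hapos : 0 < a := hpos a (Finset.mem_insert_self a T')
    obtain ⟨N', hN'⟩ := ih (fun t ht => hpos t (Finset.mem_insert_of_mem ht))
    by_cases hT' : T' = ∅
    · subst hT'
      refine ⟨1, fun m hm hdvd => ?_⟩
      rw [Finset.gcd_insert, Finset.gcd_empty] at hdvd
      simp only [id] at hdvd
      obtain ⟨k, rfl⟩ := (Nat.gcd_zero_right a ▸ hdvd : a ∣ m)
      refine ⟨fun _ => k, ?_⟩
      rw [Finset.sum_insert ha, Finset.sum_empty]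
      ring
    · set g' := T'.gcd id with hg'def
      have hg'pos : 0 < g' := by
        rcases Nat.eq_zero_or_pos g' with h0 | h
        · exfalso
          obtain ⟨t, ht⟩ := Finset.nonempty_of_ne_empty hT'
          have h1 := Finset.gcd_eq_zero_iff.mp h0 t ht
          have h2 := hpos t (Finset.mem_insert_of_mem ht)
          simp only [id] at h1
          omega
        · exact h
      refine ⟨N' + 2 * a * g', fun m hm hdvd => ?_⟩
      rw [Finset.gcd_insert] at hdvd
      set g := Nat.gcd (id a) g' with hgdef
      obtain ⟨m₁, hm₁⟩ := hdvd
      -- Bezout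
      have hbez : (g : ℤ) = a * Nat.gcdA a g' + g' * Nat.gcdB a g' := by
        rw [hgdef]
        simpa using Nat.gcd_eq_gcd_ab a g'
      set z : ℤ := Nat.gcdA a g' * m₁ with hzdef
      set t : ℤ := z % (g' : ℤ) + g' with htdef
      have hg'z : (0:ℤ) < (g' : ℤ) := by exact_mod_cast hg'pos
      have ht1 : 1 ≤ t := by
        have := Int.emod_nonneg z (ne_of_gt hg'z)
        omega
      have ht2 : t ≤ 2 * g' := by
        have := Int.emod_lt_of_pos z hg'z
        omega
      have hta : t * a ≤ m := by
        have : t * a ≤ 2 * g' * a := by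
          apply mul_le_mul_of_nonneg_right ht2
          exact_mod_cast Nat.zero_le a
        have hm' : (2 * a * g' : ℤ) ≤ m := by exact_mod_cast le_trans (by omega) hm
        nlinarith
      have hdvd2 : (g' : ℤ) ∣ (m : ℤ) - t * a := by
        have e1 : (m : ℤ) = a * z + g' * (Nat.gcdB a g' * m₁) := by
          rw [hzdef]
          have : (m : ℤ) = (g : ℤ) * m₁ := by exact_mod_cast hm₁
          rw [this, hbez]
          ring
        have hz : (g':ℤ) * (z / g') + z % g' = z := Int.mul_ediv_add_emod z g'
        refine ⟨Nat.gcdB a g' * m₁ + a * (z / g') - a, ?_⟩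
        rw [e1, htdef]
        linear_combination (-(a:ℤ)) * hz
      set tn : ℕ := t.toNat with htn
      have htt : (tn : ℤ) = t := Int.toNat_of_nonneg (by omega)
      have htan : tn * a ≤ m := by
        have : ((tn * a : ℕ) : ℤ) ≤ (m : ℤ) := by
          push_cast
          rw [htt]
          exact hta
        exact_mod_cast this
      have hdvd3 : g' ∣ m - tn * a := by
        have hcast : ((m - tn * a : ℕ) : ℤ) = (m : ℤ) - t * a := by
          push_cast [htan]
          rw [htt]
        have h5 := hdvd2
        rw [← hcast] at h5
        exact_mod_cast h5
      have hbig : N' ≤ m - tn * a := by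
        have htle : (tn : ℤ) ≤ 2 * g' := by rw [htt]; exact ht2
        have htle' : tn ≤ 2 * g' := by exact_mod_cast htle
        have h2 : tn * a ≤ 2 * g' * a := Nat.mul_le_mul_right a htle'
        have h3 : 2 * g' * a = 2 * a * g' := by ring
        omega
      obtain ⟨f', hf'⟩ := hN' (m - tn * a) hbig hdvd3
      refine ⟨Function.update f' a tn, ?_⟩
      rw [Finset.sum_insert ha]
      have hupd : ∀ s ∈ T', Function.update f' a tn s * s = f' s * s := by
        intro s hs
        have : s ≠ a := fun h => ha (h ▸ hs)
        rw [Function.update_of_ne this]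
      rw [Finset.sum_congr rfl hupd, Function.update_self, ← hf']
      omega

open Classical in
/-- lengths of elementary circuits -/
noncomputable def clen (A : Fin d → Fin d → WithBot ℝ) : Finset ℕ :=
  (Finset.Icc 1 d).filter (fun g => ∃ x, CircLW A g x)

/-- gcd of circuit lengths -/
noncomputable def gam (A : Fin d → Fin d → WithBot ℝ) : ℕ := (clen A).gcd id

lemma mem_clen {g : ℕ} : g ∈ clen A ↔ ((1 ≤ g ∧ g ≤ d) ∧ ∃ x, CircLW A g x) := by
  classical
  simp [clen, Finset.mem_filter, Finset.mem_Icc]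

lemma clw_len_mem {g : ℕ} {x : ℝ} (h : CircLW A g x) : g ∈ clen A := by
  obtain ⟨q, hq, _⟩ := h
  exact mem_clen.mpr ⟨⟨hq.1, circ_len_le hq⟩, x, q, hq, ‹x = cwt A g q›⟩

lemma gam_dvd_clw {g : ℕ} {x : ℝ} (h : CircLW A g x) : gam A ∣ g :=
  Finset.gcd_dvd (clw_len_mem h)

lemma gam_dvd_list {S : List (ℕ × ℝ)} (hS : ∀ gx ∈ S, CircLW A gx.1 gx.2) :
    gam A ∣ (S.map Prod.fst).sum := by
  induction S with
  | nil => simp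
  | cons a S' ih =>
    simp only [List.map_cons, List.sum_cons]
    exact dvd_add (gam_dvd_clw (hS a (List.mem_cons_self)))
      (ih fun gx h => hS gx (List.mem_cons_of_mem _ h))

lemma gam_dvd_closed {n : ℕ} {u : Fin d} {p : ℕ → Fin d} (hp : IsWalkFrom A n u u p) :
    gam A ∣ n := by
  obtain ⟨S, hlen, _, hS⟩ := ext_closed n p u hp
  rw [hlen]
  exact gam_dvd_list hS

lemma closed_bounded (hd : 0 < d)
    (hconn : ∀ i j : Fin d, ∃ n : ℕ, 0 < n ∧ mpPow A n i j ≠ ⊥)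
    (hρ : sSup (circuitAvgWeights A) = 0) :
    ∃ (K : ℝ) (N : ℕ), ∀ (u : Fin d) (m : ℕ), N ≤ m → gam A ∣ m →
      ∃ p, IsWalkFrom A m u u p ∧ -K ≤ wt A m p := by
  classical
  obtain ⟨g₀, q₀, hq₀, hw₀⟩ := exists_zero_circuit hd hconn hρ
  set v := q₀ 0 with hv
  have grand : ∀ T : Finset ℕ, T ⊆ clen A →
      ∃ P : ℕ, ∀ f : ℕ → ℕ, ∃ p, IsWalkFrom A (P + ∑ t ∈ T, f t * t) v v p := by
    intro T
    induction T using Finset.induction_on with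
    | empty =>
      intro _
      refine ⟨0, fun f => ⟨fun _ => v, ?_⟩⟩
      simpa using (walk_nil v).1
    | @insert a T' ha ih =>
      intro hsub
      obtain ⟨P', hP'⟩ := ih (fun t ht => hsub (Finset.mem_insert_of_mem ht))
      have haC : a ∈ clen A := hsub (Finset.mem_insert_self a T')
      obtain ⟨_, x, qa, hqa, _⟩ := mem_clen.mp haC
      obtain ⟨n₁, s, hs⟩ := exists_walk hconn v (qa 0)
      obtain ⟨n₂, tw, htw⟩ := exists_walk hconn (qa 0) v
      refine ⟨P' + n₁ + n₂, fun f => ?_⟩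
      obtain ⟨p1, hp1⟩ := hP' f
      obtain ⟨pl, hpl, _⟩ := circuit_iter hqa (f a)
      have h1 := walk_append hs hpl
      have h2 := walk_append h1.1 htw
      have h3 := walk_append hp1 h2.1
      refine ⟨_, walk_len_congr ?_ h3.1⟩
      rw [Finset.sum_insert ha]
      omega
  obtain ⟨P, hP⟩ := grand (clen A) (subset_refl _)
  have hγP : gam A ∣ P := by
    obtain ⟨p0, hp0⟩ := hP (fun _ => 0)
    simp only [Nat.zero_mul, Finset.sum_const_zero, Nat.add_zero] at hp0
    exact gam_dvd_closed hp0
  obtain ⟨Nns, hNns⟩ := ns_rep (clen A) (fun t ht => (mem_clen.mp ht).1.1)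
  have hΛ : ∀ L, P + Nns ≤ L → gam A ∣ L → ∃ p, IsWalkFrom A L v v p := by
    intro L hL hdvd
    have h1 : gam A ∣ L - P := Nat.dvd_sub hdvd hγP
    obtain ⟨f, hf⟩ := hNns (L - P) (by omega) h1
    obtain ⟨p, hp⟩ := hP f
    exact ⟨p, walk_len_congr (by omega) hp⟩
  have hg₀pos : 0 < g₀ := hq₀.1
  have hcw0 : cwt A g₀ q₀ = 0 := hw₀.symm
  have hwit : ∀ r : ℕ, ∃ (L : ℕ) (w : ℝ), (∃ L' p, IsWalkFrom A L' v v p ∧ L' % g₀ = r) →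
      (∃ p, IsWalkFrom A L v v p ∧ wt A L p = w ∧ L % g₀ = r) := by
    intro r
    by_cases h : ∃ L' p, IsWalkFrom A L' v v p ∧ L' % g₀ = r
    · obtain ⟨L', p, hp, hr⟩ := h
      exact ⟨L', wt A L' p, fun _ => ⟨p, hp, rfl, hr⟩⟩
    · exact ⟨0, 0, fun hc => absurd hc h⟩
  choose Lr wr hLw using hwit
  set Kv := ∑ r ∈ Finset.range g₀, |wr r| with hKv
  set Nv := P + Nns + ∑ r ∈ Finset.range g₀, Lr r with hNv
  have hv_bound : ∀ m, Nv ≤ m → gam A ∣ m →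
      ∃ p, IsWalkFrom A m v v p ∧ -Kv ≤ wt A m p := by
    intro m hm hdvd
    obtain ⟨pm, hpm⟩ := hΛ m (by omega) hdvd
    have hrlt : m % g₀ < g₀ := Nat.mod_lt _ hg₀pos
    obtain ⟨pr, hpr, hwr, hLr⟩ := hLw (m % g₀) ⟨m, pm, hpm, rfl⟩
    have hLrle : Lr (m % g₀) ≤ m := by
      have h1 : Lr (m % g₀) ≤ ∑ r' ∈ Finset.range g₀, Lr r' :=
        Finset.single_le_sum (f := Lr) (fun _ _ => Nat.zero_le _) (Finset.mem_range.mpr hrlt)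
      omega
    have hdv : g₀ ∣ m - Lr (m % g₀) := by
      have hmeq : Lr (m % g₀) % g₀ = m % g₀ := hLr
      exact (Nat.modEq_iff_dvd' hLrle).mp hmeq
    obtain ⟨pz, hpz, hwz⟩ := circuit_iter hq₀ ((m - Lr (m % g₀)) / g₀)
    have hzlen : ((m - Lr (m % g₀)) / g₀) * g₀ = m - Lr (m % g₀) := Nat.div_mul_cancel hdv
    have happ := walk_append hpr hpz
    refine ⟨_, walk_len_congr (by omega) happ.1, ?_⟩
    have hEq : Lr (m % g₀) + ((m - Lr (m % g₀)) / g₀) * g₀ = m := by omega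
    have hwteq := happ.2
    rw [hEq, hwr, hwz] at hwteq
    rw [hwteq, hcw0, mul_zero, add_zero]
    have habs : |wr (m % g₀)| ≤ Kv :=
      Finset.single_le_sum (f := fun r => |wr r|) (fun _ _ => abs_nonneg _)
        (Finset.mem_range.mpr hrlt)
    have := neg_abs_le (wr (m % g₀))
    linarith
  choose n1 hn1 using fun u => hconn u v
  choose n2 hn2 using fun u => hconn v u
  choose su hsu using (fun u => pow_ne_bot_iff.mp (hn1 u).2 :
    ∀ u, ∃ p, IsWalkFrom A (n1 u) u v p)
  choose tu htu using (fun u => pow_ne_bot_iff.mp (hn2 u).2 :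
    ∀ u, ∃ p, IsWalkFrom A (n2 u) v u p)
  refine ⟨Kv + ∑ u : Fin d, (|wt A (n1 u) (su u)| + |wt A (n2 u) (tu u)|),
    Nv + ∑ u : Fin d, (n1 u + n2 u), ?_⟩
  intro u m hm hdvd
  have hγuv : gam A ∣ n1 u + n2 u := gam_dvd_closed (walk_append (hsu u) (htu u)).1
  have hsle : n1 u + n2 u ≤ ∑ u' : Fin d, (n1 u' + n2 u') :=
    Finset.single_le_sum (f := fun u' => n1 u' + n2 u') (fun _ _ => Nat.zero_le _)
      (Finset.mem_univ u)
  have hmid : gam A ∣ m - (n1 u + n2 u) := Nat.dvd_sub hdvd hγuv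
  obtain ⟨pm, hpm, hwm⟩ := hv_bound (m - (n1 u + n2 u)) (by omega) hmid
  have h1 := walk_append (hsu u) hpm
  have h2 := walk_append h1.1 (htu u)
  refine ⟨_, walk_len_congr (by omega) h2.1, ?_⟩
  have hEq : (n1 u + (m - (n1 u + n2 u))) + n2 u = m := by omega
  have hwteq := h2.2
  rw [h1.2, hEq] at hwteq
  rw [hwteq]
  have hb : |wt A (n1 u) (su u)| + |wt A (n2 u) (tu u)|
      ≤ ∑ u' : Fin d, (|wt A (n1 u') (su u')| + |wt A (n2 u') (tu u')|) :=
    Finset.single_le_sum (f := fun u' => |wt A (n1 u') (su u')| + |wt A (n2 u') (tu u')|)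
      (fun _ _ => add_nonneg (abs_nonneg _) (abs_nonneg _)) (Finset.mem_univ u)
  have hb1 := neg_abs_le (wt A (n1 u) (su u))
  have hb2 := neg_abs_le (wt A (n2 u) (tu u))
  linarith

/-- weights of short walks, as a function of a finite tuple -/
def wtF (A : Fin d → Fin d → WithBot ℝ) (m : ℕ) (p : Fin (m+1) → Fin d) : ℝ :=
  wt A m (fun k => p ⟨min k m, by omega⟩)

def QW (A : Fin d → Fin d → WithBot ℝ) : Set ℝ :=
  ⋃ m ∈ Finset.range d, Set.range (wtF A m)

lemma QW_finite : (QW A).Finite :=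
  Set.Finite.biUnion (Finset.finite_toSet _) (fun m _ => Set.finite_range _)

lemma wt_mem_QW {m : ℕ} (hm : m < d) (p : ℕ → Fin d) : wt A m p ∈ QW A := by
  have he : wt A m p = wtF A m (fun k => p k) := by
    rw [wtF, wt, wt]
    apply Finset.sum_congr rfl
    intro k hk
    have hk' := Finset.mem_range.mp hk
    have e1 : min k m = k := Nat.min_eq_left (by omega)
    have e2 : min (k+1) m = k+1 := Nat.min_eq_left (by omega)
    simp only [aw, e1, e2]
  rw [he]
  simp only [QW, Set.mem_iUnion]
  exact ⟨m, by simpa using hm, Set.mem_range_self _⟩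

/-- negative circuit weights -/
noncomputable def WnegF (A : Fin d → Fin d → WithBot ℝ) : Finset ℝ := by
  classical
  exact (WSet_finite (A := A)).toFinset.filter (fun x => x < 0)

noncomputable def QC (A : Fin d → Fin d → WithBot ℝ) (β : ℕ) : Set ℝ :=
  Set.range (fun f : (WnegF A → Fin (β+1)) =>
    ∑ y ∈ (WnegF A).attach, ((f y : ℕ) : ℝ) * (y : ℝ))

lemma QC_finite {β : ℕ} : (QC A β).Finite := by
  classical
  exact Set.finite_range _

lemma mem_WnegF {x : ℝ} : x ∈ WnegF A ↔ x ∈ WSet A ∧ x < 0 := by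
  classical
  simp [WnegF, Set.Finite.mem_toFinset]

lemma listsum_mem_QC (hρ : sSup (circuitAvgWeights A) = 0)
    {S : List (ℕ × ℝ)} (hS : ∀ gx ∈ S, CircLW A gx.1 gx.2)
    {δ B : ℝ} (hδ : 0 < δ) (hδp : ∀ g x, CircLW A g x → x < 0 → x ≤ -δ)
    (hB : -B ≤ (S.map Prod.snd).sum) {β : ℕ} (hβ : B / δ ≤ (β : ℝ)) :
    (S.map Prod.snd).sum ∈ QC A β := by
  classical
  set L : Multiset ℝ := ↑(S.map Prod.snd) with hL
  have hLsum : (S.map Prod.snd).sum = L.sum := rfl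
  have hmem : ∀ x ∈ L, x ∈ WSet A ∧ x ≤ 0 := by
    intro x hx
    rw [hL, Multiset.mem_coe, List.mem_map] at hx
    obtain ⟨gx, hgx, rfl⟩ := hx
    exact ⟨⟨gx.1, hS gx hgx⟩, clw_nonpos hρ (hS gx hgx)⟩
  have hsum1 : L.sum = ∑ a ∈ L.toFinset, L.count a • a :=
    Finset.sum_multiset_count L
  have hsum2 : ∑ a ∈ L.toFinset, L.count a • a
      = ∑ a ∈ L.toFinset.filter (fun x => x < 0), L.count a • a := by
    symm
    apply Finset.sum_filter_of_ne
    intro a ha hne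
    have h0 := (hmem a (Multiset.mem_toFinset.mp ha)).2
    rcases lt_or_eq_of_le h0 with h | h
    · exact h
    · exact absurd (by rw [h, smul_zero]) hne
  have hsub : L.toFinset.filter (fun x => x < 0) ⊆ WnegF A := by
    intro a ha
    rw [Finset.mem_filter] at ha
    exact mem_WnegF.mpr ⟨(hmem a (Multiset.mem_toFinset.mp ha.1)).1, ha.2⟩
  have hsum3 : ∑ a ∈ L.toFinset.filter (fun x => x < 0), L.count a • a
      = ∑ a ∈ WnegF A, L.count a • a := by
    apply Finset.sum_subset hsub
    intro a ha hna
    have hcnt : L.count a = 0 := by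
      rw [Multiset.count_eq_zero]
      intro hmem'
      apply hna
      rw [Finset.mem_filter]
      exact ⟨Multiset.mem_toFinset.mpr hmem', (mem_WnegF.mp ha).2⟩
    rw [hcnt, zero_smul]
  have htotal : (S.map Prod.snd).sum = ∑ a ∈ WnegF A, L.count a • a := by
    rw [hLsum, hsum1, hsum2, hsum3]
  -- each term is nonpositive
  have hterm : ∀ a ∈ WnegF A, L.count a • a ≤ (0:ℝ) := by
    intro a ha
    have := (mem_WnegF.mp ha).2
    exact nsmul_nonpos (le_of_lt this) _
  -- count bound
  have hcount : ∀ a ∈ WnegF A, L.count a ≤ β := by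
    intro a ha
    obtain ⟨haW, haneg⟩ := mem_WnegF.mp ha
    obtain ⟨g, hg⟩ := haW
    have hadel : a ≤ -δ := hδp g a hg haneg
    have hrest : ∑ b ∈ (WnegF A).erase a, L.count b • b ≤ 0 :=
      Finset.sum_nonpos (fun b hb => hterm b (Finset.mem_of_mem_erase hb))
    have hsplit : ∑ b ∈ (WnegF A).erase a, L.count b • b + L.count a • a
        = ∑ b ∈ WnegF A, L.count b • b := Finset.sum_erase_add _ _ ha
    have hlow : -B ≤ L.count a • a := by
      rw [htotal] at hB
      linarith
    have hnsmul : (L.count a : ℝ) * a = L.count a • a := (nsmul_eq_mul _ _).symm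
    have hcd : (L.count a : ℝ) * δ ≤ B := by
      nlinarith [hlow, hnsmul, hadel, (by positivity : (0:ℝ) ≤ (L.count a : ℝ))]
    have : (L.count a : ℝ) ≤ B / δ := (le_div_iff₀ hδ).mpr hcd
    exact_mod_cast le_trans this hβ
  refine ⟨fun y => ⟨L.count (y : ℝ), by have := hcount (y : ℝ) y.2; omega⟩, ?_⟩
  simp only
  rw [htotal, ← Finset.sum_attach (WnegF A) (fun a => L.count a • a)]
  apply Finset.sum_congr rfl
  intro y _
  rw [nsmul_eq_mul]

lemma pow_succ' (c : ℕ) : mpPow A (c+1) = mpMul A (mpPow A c) := rfl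

lemma pow_shift {a b : ℕ} (h : mpPow A a = mpPow A b) (k : ℕ) :
    mpPow A (a + k) = mpPow A (b + k) := by
  induction k with
  | zero => simpa using h
  | succ k ih =>
    rw [(by omega : a + (k+1) = (a+k)+1), (by omega : b + (k+1) = (b+k)+1),
      pow_succ', pow_succ', ih]

lemma values_finite (hd : 0 < d)
    (hconn : ∀ i j : Fin d, ∃ n : ℕ, 0 < n ∧ mpPow A n i j ≠ ⊥)
    (hρ : sSup (circuitAvgWeights A) = 0) :
    ∃ (V : Set (WithBot ℝ)), V.Finite ∧ ∃ N : ℕ, ∀ n (i j : Fin d), N ≤ n →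
      mpPow A n i j ∈ V := by
  classical
  obtain ⟨K, NK, hK⟩ := closed_bounded hd hconn hρ
  obtain ⟨δ, hδ, hδp⟩ := exists_delta (A := A)
  set β := Nat.ceil (K / δ) with hβdef
  refine ⟨{⊥} ∪ (fun z : ℝ × ℝ => ((z.1 + z.2 : ℝ) : WithBot ℝ)) '' ((QW A) ×ˢ (QC A β)),
    Set.Finite.union (Set.finite_singleton _)
      (Set.Finite.image _ (Set.Finite.prod QW_finite QC_finite)), NK + d, ?_⟩
  intro n i j hn
  rcases pow_attained n i j with hbot | ⟨p, hp, hval⟩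
  · rw [hbot]
    exact Set.mem_union_left _ rfl
  · obtain ⟨m, q, S, hm, hq, hlen, hwt, hS⟩ := ext_walk hd n p i j hp
    have hγ : gam A ∣ (S.map Prod.fst).sum := gam_dvd_list hS
    have hNmid : NK ≤ (S.map Prod.fst).sum := by omega
    obtain ⟨pc, hpc, hwc⟩ := hK j ((S.map Prod.fst).sum) hNmid hγ
    have happ := walk_append hq hpc
    have hlow := le_pow (m + (S.map Prod.fst).sum) i j _ happ.1
    have hw2 := happ.2
    rw [← hlen] at hlow hw2
    rw [hval, WithBot.coe_le_coe] at hlow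
    rw [hw2] at hlow
    have hSsum : -K ≤ (S.map Prod.snd).sum := by linarith
    have hQc := listsum_mem_QC hρ hS hδ hδp hSsum (Nat.le_ceil _)
    have hQw := wt_mem_QW (A := A) hm q
    apply Set.mem_union_right
    refine ⟨(wt A m q, (S.map Prod.snd).sum), ⟨hQw, hQc⟩, ?_⟩
    simp only
    rw [hval, hwt]

end MPAux

/-- Cyclicity theorem (Cohen–Dubois–Quadrat–Viot): if the graph of `A` is strongly
connected (every node reaches every other by a finite-weight path of positive length)
and `ρ_max(A) = 0`, then the sequence of `(max,+)` powers of `A` is ultimately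
periodic. -/
theorem mpPow_ultimately_periodic {d : ℕ} (hd : 0 < d)
    (A : Fin d → Fin d → WithBot ℝ)
    (hconn : ∀ i j : Fin d, ∃ n : ℕ, 0 < n ∧ mpPow A n i j ≠ ⊥)
    (hρ : sSup (circuitAvgWeights A) = 0) :
    ∃ (n₀ c : ℕ), 1 ≤ c ∧ ∀ n : ℕ, n₀ ≤ n → mpPow A (n + c) = mpPow A n := by
  classical
  obtain ⟨V, hVfin, N, hV⟩ := MPAux.values_finite hd hconn hρ
  have hMfin : (Set.univ.pi (fun _ : Fin d => Set.univ.pi (fun _ : Fin d => V))).Finite :=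
    Set.Finite.pi (fun _ => Set.Finite.pi (fun _ => hVfin))
  have hmap : Set.MapsTo (fun n => mpPow A (N + n)) Set.univ
      (Set.univ.pi (fun _ : Fin d => Set.univ.pi (fun _ : Fin d => V))) := by
    intro n _
    rw [Set.mem_pi]
    intro i _
    rw [Set.mem_pi]
    intro j _
    exact hV (N + n) i j (by omega)
  obtain ⟨x, _, y, _, hxy, heq⟩ :=
    Set.infinite_univ.exists_ne_map_eq_of_mapsTo hmap hMfin
  have main : ∀ x y : ℕ, x < y → mpPow A (N + x) = mpPow A (N + y) →
      ∃ (n₀ c : ℕ), 1 ≤ c ∧ ∀ n : ℕ, n₀ ≤ n → mpPow A (n + c) = mpPow A n := by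
    intro x y hlt he
    refine ⟨N + x, y - x, by omega, ?_⟩
    intro n hn
    have hbase : mpPow A ((N + x) + (y - x)) = mpPow A (N + x) := by
      rw [(by omega : (N + x) + (y - x) = N + y)]
      exact he.symm
    obtain ⟨k, rfl⟩ : ∃ k, n = (N + x) + k := ⟨n - (N + x), by omega⟩
    have hsh := MPAux.pow_shift hbase k
    calc mpPow A ((N + x) + k + (y - x)) = mpPow A ((N + x) + (y - x) + k) := by
          rw [(by omega : (N + x) + k + (y - x) = (N + x) + (y - x) + k)]
      _ = mpPow A ((N + x) + k) := hsh
  rcases lt_trichotomy x y with hlt | heqq | hgt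
  · exact main x y hlt heq
  · exact absurd heqq hxy
  · exact main y x hgt heq.symm
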